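/- For every composition γ, D_γ(q,t)(x,y) = ∑_{(α,β) : α·β = γ} D_α(q,t)(x) · D_β(q,t)(y), where the sum is over all pairs of (possibly empty) compositions whose concatenation is γ. (This is the two-alphabet form of the coproduct rule △D_γ(q,t) = ∑_{α·β=γ} D_α(q,t) ⊗ D_β(q,t).) -/

import Mathlib

namespace QSymPaper

attribute [local instance 0] Classical.propDecidable

noncomputable section

/-- A composition condition: all parts are positive. -/
def IsComp (α : List ℕ) : Prop := ∀ a ∈ α, 0 < a

/-- `set(α)`: the set of proper partial sums of `α`. -/
def setComp (α : List ℕ) : Finset ℕ :=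
  (Finset.range (α.length - 1)).image (fun j => (α.take (j + 1)).sum)

/-- `comp(S)` for `S ⊆ [n−1]`: the composition of `n` whose set of partial sums is `S`. -/
def compOf (n : ℕ) (S : Finset ℕ) : List ℕ :=
  if n = 0 then []
  else
    let l := S.sort (· ≤ ·) ++ [n]
    List.zipWith (fun a b => a - b) l (0 :: l)

/-- Monomial quasisymmetric function `M_α`, in the variables of the sub-alphabet `P`. -/
def Mqs (σ : Type) [LinearOrder σ] (F : Type) [CommRing F] (P : σ → Prop) (α : List ℕ) :
    MvPowerSeries σ F :=
  fun (d : σ →₀ ℕ) => if (∀ i ∈ d.support, P i) ∧ (d.support.sort (· ≤ ·)).map (fun i => d i) = α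
    then 1 else 0

/-- Fundamental quasisymmetric function `L_{comp(S)}` (for `S ⊆ [n−1]`). -/
def Lqs (σ : Type) [LinearOrder σ] (F : Type) [CommRing F] (P : σ → Prop)
    (n : ℕ) (S : Finset ℕ) : MvPowerSeries σ F :=
  ∑ T ∈ (Finset.Icc 1 (n - 1)).powerset.filter (fun T => S ⊆ T), Mqs σ F P (compOf n T)

/-- The weight `wt_I(i) = |[1,i−1] ∩ I| + 1`. -/
def wt (I : Finset ℕ) (i : ℕ) : ℕ := (Finset.Icc 1 (i - 1) ∩ I).card + 1

/-- `A∁ = [N] ∖ A`. -/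
def coSet (N : ℕ) (A : Finset ℕ) : Finset ℕ := Finset.Icc 1 N \ A

/-- `e(A)`: right endpoints of the maximal intervals of `A`, except `N`. -/
def eSet (N : ℕ) (A : Finset ℕ) : Finset ℕ := (A.filter (fun b => b + 1 ∉ A)).erase N

/-- `ē(A) = e(A) ∪ e(A∁)`. -/
def ebar (N : ℕ) (A : Finset ℕ) : Finset ℕ := eSet N A ∪ eSet N (coSet N A)

/-- `T_S`: the image of `T ⊆ [|S|]` under the increasing enumeration of `S` (1-based). -/
def embedIn (S T : Finset ℕ) : Finset ℕ :=
  T.image (fun t => (S.sort (· ≤ ·)).getD (t - 1) 0)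

/-- `std_S(T)`: ranks within `S` of the elements of `T ⊆ S`. -/
def stdSet (S T : Finset ℕ) : Finset ℕ :=
  T.image (fun t => (S.filter (· ≤ t)).card)

/-- `I #_A J := I_{A∁} ⊔ J_A`. -/
def hashAJ (N : ℕ) (A I J : Finset ℕ) : Finset ℕ :=
  embedIn (coSet N A) I ∪ embedIn A J

/-- `I ⧢_A J := e(A) ⊔ ((I #_A J) ∖ ē(A))`. -/
def shSet (N : ℕ) (A I J : Finset ℕ) : Finset ℕ :=
  eSet N A ∪ (hashAJ N A I J \ ebar N A)

/-- The `i`-th entry (1-based) of the word `w`. -/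
def wordEntry (w : List ℕ) (i : ℕ) : ℕ := w.getD (i - 1) 0

/-- The descent set of the word `w`. -/
def wordDes (w : List ℕ) : Finset ℕ :=
  (Finset.Icc 1 (w.length - 1)).filter (fun i => wordEntry w (i + 1) < wordEntry w i)

/-- `u ⧢_A v`: the word of length `N` whose subword in positions `A` is `v`
and whose subword in the complementary positions is `u`. -/
def shWord (N : ℕ) (u v : List ℕ) (A : Finset ℕ) : List ℕ :=
  (List.range N).map (fun p0 =>
    if p0 + 1 ∈ A then v.getD ((A.filter (· ≤ p0 + 1)).card - 1) 0
    else u.getD (((coSet N A).filter (· ≤ p0 + 1)).card - 1) 0)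

/-- `v[m]`: the `m`-shifted word. -/
def shiftWord (m : ℕ) (v : List ℕ) : List ℕ := v.map (· + m)

/-- `u` is (the word of) a permutation in `S_m`. -/
def IsPermWord (m : ℕ) (u : List ℕ) : Prop := u.Perm (List.range' 1 m)

/-- `z_A`. -/
def zA (N : ℕ) (A : Finset ℕ) : ℕ :=
  if N ∈ A then WithBot.unbotD 0 (coSet N A).max else WithBot.unbotD 0 A.max

/-- `J̃_A`. -/
def Jtilde (N : ℕ) (A J : Finset ℕ) : Finset ℕ :=
  if N ∈ A then insert N (embedIn A J) else insert (zA N A) (embedIn A J)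

/-- `𝒜_{α,β}` (as a set of subsets of `[m+n]`, where `I = set α`, `J = set β`). -/
def calA (m n : ℕ) (I J : Finset ℕ) : Finset (Finset ℕ) :=
  ((Finset.Icc 1 (m + n)).powersetCard n).filter
    (fun A => ebar (m + n) A \ {zA (m + n) A} ⊆ hashAJ (m + n) A I J)

/-- `Ψ(A) = std_{(I #_A J) ⊔ {z_A} ⊔ {m+n}}(J̃_A)`. -/
def Psi (m n : ℕ) (I J : Finset ℕ) (A : Finset ℕ) : Finset ℕ :=
  stdSet (insert (m + n) (insert (zA (m + n) A) (hashAJ (m + n) A I J)))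
    (Jtilde (m + n) A J)

/-- `α ⧢_D β`: the shuffle of the compositions `α` and `β` whose `β`-entries occupy `D`. -/
def shComp (α β : List ℕ) (D : Finset ℕ) : List ℕ :=
  shWord (α.length + β.length) α β D

/-- `Σ(α,β,D,i)`: the sum of the first `d_i − 1` entries of `α ⧢_D β`. -/
def psum (α β : List ℕ) (D : Finset ℕ) (i : ℕ) : ℕ :=
  ((shComp α β D).take ((D.sort (· ≤ ·)).getD (i - 1) 0 - 1)).sum

/-- `Φ(D)`. -/
def Phi (α β : List ℕ) (D : Finset ℕ) : Finset ℕ :=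
  (Finset.Icc 1 β.length).biUnion (fun i =>
    Finset.Icc (psum α β D i + 1) (psum α β D i + β.getD (i - 1) 0))

/-- The index set for two-way overlapping shuffles of `α` and `β`: triples `(D, S₁, S₂)`
where `D` records the shuffle, `S₁` the positions of `+₁` (an `α`-entry immediately
followed by a `β`-entry) and `S₂` the positions of `+₂`. -/
def twoWayIdx (α β : List ℕ) : Finset (Finset ℕ × Finset ℕ × Finset ℕ) :=
  (((Finset.Icc 1 (α.length + β.length)).powersetCard β.length) ×ˢ
    ((Finset.Icc 1 (α.length + β.length - 1)).powerset ×ˢ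
      (Finset.Icc 1 (α.length + β.length - 1)).powerset)).filter
    (fun x => (∀ p ∈ x.2.1, p ∉ x.1 ∧ p + 1 ∈ x.1) ∧ (∀ p ∈ x.2.2, p ∈ x.1 ∧ p + 1 ∉ x.1))

/-- `γ⁺`: the composition obtained from the two-way overlapping shuffle `(D,S₁,S₂)`
by carrying out the marked additions. -/
def plusComp (α β : List ℕ) (D S₁ S₂ : Finset ℕ) : List ℕ :=
  compOf (α.sum + β.sum)
    (((Finset.Icc 1 (α.length + β.length - 1)) \ (S₁ ∪ S₂)).image
      (fun p => ((shComp α β D).take p).sum))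

/-- `D_α(q,t)`. -/
def Dqt (σ : Type) [LinearOrder σ] (F : Type) [Field F] (P : σ → Prop) (q t : F)
    (α : List ℕ) : MvPowerSeries σ F :=
  if α = [] then 1
  else ∑ T ∈ (setComp α).powerset,
    (q ^ ((T.card + 1 : ℤ) - (α.sum : ℤ)) * (-t) ^ (α.length - (T.card + 1))) •
      Mqs σ F P (compOf α.sum T)

/-- Enriched monomial quasisymmetric function with generic weight `c`
(`c = 2` gives `η_α`, `c = q+1` gives `η_α^{(q)}`). -/
def etaQ (σ : Type) [LinearOrder σ] (F : Type) [CommRing F] (P : σ → Prop) (c : F)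
    (α : List ℕ) : MvPowerSeries σ F :=
  if α = [] then 1
  else ∑ T ∈ (setComp α).powerset, (c ^ (T.card + 1)) • Mqs σ F P (compOf α.sum T)

/-- `K_{comp(J)}(ν)` (for `J ⊆ [n−1]`, `n ≥ 1`). -/
def Kset (σ : Type) [LinearOrder σ] (P : σ → Prop) (ν : ℤ) (n : ℕ) (J : Finset ℕ) :
    MvPowerSeries σ ℂ :=
  ((ν : ℂ) ^ (-((n : ℤ) - 1))) •
    ∑ I ∈ (Finset.Icc 1 (n - 1)).powerset,
      ((-1 : ℂ) ^ ((J \ I).card) *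
        ((ν : ℂ) - 1) ^ ((Finset.Icc 1 (n - 1) \ (I ∪ J)).card)) • Lqs σ ℂ P n I

/-- `K_α(ν)` for a composition `α`. -/
def Kcomp (σ : Type) [LinearOrder σ] (P : σ → Prop) (ν : ℤ) (α : List ℕ) :
    MvPowerSeries σ ℂ :=
  if α = [] then 1 else Kset σ P ν α.sum (setComp α)

/-- The quasisymmetric Hall–Littlewood function `G_I(q)` (for `I ⊆ [n−1]`),
with `q = RatFunc.X`. -/
def Gq (σ : Type) [LinearOrder σ] (P : σ → Prop) (n : ℕ) (I : Finset ℕ) :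
    MvPowerSeries σ (RatFunc ℂ) :=
  ∑ J ∈ (Finset.Icc 1 (n - 1)).powerset.filter (fun J => I ⊆ J),
    ((-1 : RatFunc ℂ) ^ ((J \ I).card) * RatFunc.X ^ (∑ i ∈ J \ I, wt I i)) •
      Lqs σ (RatFunc ℂ) P n J

/-- `G_γ(q)` for a composition `γ`. -/
def Gcomp (σ : Type) [LinearOrder σ] (P : σ → Prop) (γ : List ℕ) :
    MvPowerSeries σ (RatFunc ℂ) :=
  if γ = [] then 1 else Gq σ P γ.sum (setComp γ)

/-- The `q`-monomial quasisymmetric function `M_{comp(I)}(q)` (for `I ⊆ [n−1]`). -/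
def MqF (σ : Type) [LinearOrder σ] (P : σ → Prop) (n : ℕ) (I : Finset ℕ) :
    MvPowerSeries σ (RatFunc ℂ) :=
  ∑ T ∈ (Finset.Icc 1 (n - 1)).powerset.filter (fun T => I ⊆ T),
    ((-RatFunc.X : RatFunc ℂ) ^ (T.card - I.card)) • Lqs σ (RatFunc ℂ) P n T

/-- `M_γ(q)` for a composition `γ`. -/
def Mqcomp (σ : Type) [LinearOrder σ] (P : σ → Prop) (γ : List ℕ) :
    MvPowerSeries σ (RatFunc ℂ) :=
  if γ = [] then 1 else MqF σ P γ.sum (setComp γ)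

/-- `P_w`: positions of the nonzero entries of `w`. -/
def Pset (w : List ℕ) : Finset ℕ :=
  (Finset.Icc 1 w.length).filter (fun i => wordEntry w i ≠ 0)

/-- Standardized descent set `sDes(w)`. -/
def sDes (w : List ℕ) : Finset ℕ := (stdSet (Pset w) (wordDes w)).erase (Pset w).card

def wLe (m : ℕ) (w : List ℕ) : List ℕ := w.filter (fun a => decide (a ≤ m))
def wGt (m : ℕ) (w : List ℕ) : List ℕ := (w.filter (fun a => decide (m < a))).map (· - m)
def wLe0 (m : ℕ) (w : List ℕ) : List ℕ := w.map (fun a => if a ≤ m then a else 0)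
def wGt0 (m : ℕ) (w : List ℕ) : List ℕ := w.map (fun a => if a ≤ m then 0 else a)

/-- 1-based position of `a` in the list `l`. -/
def posIn (l : List ℕ) (a : ℕ) : ℕ := l.idxOf a + 1

/-- The standardized `q`-weight `sw^w_m`. -/
def swq (m : ℕ) (w : List ℕ) (i : ℕ) : RatFunc ℂ :=
  if wordEntry w i ≤ m ∧ wordEntry w (i + 1) ≤ m then
    RatFunc.X ^ wt (wordDes (wLe m w)) (posIn (wLe m w) (wordEntry w i))
  else if m < wordEntry w i ∧ m < wordEntry w (i + 1) then
    RatFunc.X ^ wt (wordDes (wGt m w)) (posIn (wGt m w) (wordEntry w i - m))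
  else 0

/-- `c_q(u,v) = (1−q^u)(1−q^{u−1})⋯(1−q^{u−v+1})`. -/
def cq (u v : ℕ) : RatFunc ℂ := ∏ j ∈ Finset.range v, (1 - RatFunc.X ^ (u - j))

/-- The `t`-th smallest element of `I` (1-based). -/
def nthElt (I : Finset ℕ) (t : ℕ) : ℕ := (I.sort (· ≤ ·)).getD (t - 1) 0

/-- `Bre(I,J)_t`. -/
def bre (I J : Finset ℕ) (t : ℕ) : ℕ :=
  if t = 0 then 0 else (J.filter (· ≤ nthElt I t)).card

/-- `s(I,J)`. -/
def sIJ (I J : Finset ℕ) : ℕ :=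
  ∑ t ∈ Finset.Icc 1 I.card, t * (bre I J t - bre I J (t - 1) - 1)

/-- `Bre(I,J)` as a set. -/
def breSet (I J : Finset ℕ) : Finset ℕ := (Finset.Icc 1 I.card).image (bre I J)

/-- `g(I,J)`. -/
def gIJ (I J : Finset ℕ) : ℕ := ∑ k ∈ Finset.Icc 1 J.card \ breSet I J, k

/-- Near-concatenation `α ⊙ β`. -/
def nearConcat : List ℕ → List ℕ → List ℕ
  | [], β => β
  | α, [] => α
  | α, b :: βs => α.dropLast ++ (α.getLast?.getD 0 + b) :: βs

/-- The field `ℂ(q,t)`. -/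
abbrev Fqt : Type := FractionRing (MvPolynomial (Fin 2) ℂ)

/-- The variable `q` of `ℂ(q,t)`. -/
def qv : Fqt := algebraMap (MvPolynomial (Fin 2) ℂ) Fqt (MvPolynomial.X 0)

/-- The variable `t` of `ℂ(q,t)`. -/
def tv : Fqt := algebraMap (MvPolynomial (Fin 2) ℂ) Fqt (MvPolynomial.X 1)

/-- The combined two-alphabet variable set, every `x`-variable smaller
than every `y`-variable. -/
abbrev Sig2 : Type := ℕ ⊕ₗ ℕ

/-- The full alphabet. -/
def PTot : Sig2 → Prop := fun _ => True

/-- The first (`x`) alphabet. -/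
def PLft : Sig2 → Prop := fun s => (ofLex s).isLeft = true

/-- The second (`y`) alphabet. -/
def PRgt : Sig2 → Prop := fun s => (ofLex s).isRight = true



section Aux
open Finset List

lemma sort_eq_of_sorted {A : Type} [LinearOrder A] {l : List A} {S : Finset A} (hn : l.Pairwise (·<·))
    (hS : l.toFinset = S) : S.sort (·≤·) = l := by
  refine List.Perm.eq_of_sortedLE (Finset.sortedLT_sort S).sortedLE hn.sortedLT.sortedLE ?_
  refine List.perm_of_nodup_nodup_toFinset_eq (Finset.sort_nodup S _) hn.nodup ?_
  rw [Finset.sort_toFinset, hS]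

lemma sort_union {A : Type} [LinearOrder A] {S T : Finset A} (hab : ∀ a ∈ S, ∀ b ∈ T, a < b) :
    (S ∪ T).sort (·≤·) = S.sort (·≤·) ++ T.sort (·≤·) := by
  refine sort_eq_of_sorted ?_ ?_
  · rw [List.pairwise_append]
    exact ⟨(Finset.sortedLT_sort S).pairwise, (Finset.sortedLT_sort T).pairwise,
      fun a ha b hb => hab a (by simpa using ha) b (by simpa using hb)⟩
  · rw [List.toFinset_append, Finset.sort_toFinset, Finset.sort_toFinset]

lemma sort_image_strictMono {A : Type} [LinearOrder A] {f : A → A} (hf : StrictMono f) (T : Finset A) :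
    (T.image f).sort (·≤·) = (T.sort (·≤·)).map f := by
  refine sort_eq_of_sorted ?_ ?_
  · exact List.Pairwise.map f (fun a b h => hf h) (Finset.sortedLT_sort T).pairwise
  · ext x; simp [Finset.mem_sort]

def diffs : ℕ → List ℕ → List ℕ
  | _, [] => []
  | p, a :: l => (a - p) :: diffs a l

lemma zipWith_sub_eq_diffs (p : ℕ) (l : List ℕ) :
    List.zipWith (fun a b => a - b) l (p :: l) = diffs p l := by
  induction l generalizing p with
  | nil => rfl
  | cons a l ih => simp only [List.zipWith, diffs, ih]

lemma compOf_eq_diffs (n : ℕ) (S : Finset ℕ) (hn : n ≠ 0) :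
    compOf n S = diffs 0 (S.sort (· ≤ ·) ++ [n]) := by
  rw [compOf, if_neg hn]
  exact zipWith_sub_eq_diffs 0 _

lemma length_diffs (p : ℕ) (l : List ℕ) : (diffs p l).length = l.length := by
  induction l generalizing p with
  | nil => rfl
  | cons a l ih => simp [diffs, ih]

lemma length_compOf (n : ℕ) (S : Finset ℕ) (hn : n ≠ 0) :
    (compOf n S).length = S.card + 1 := by
  rw [compOf_eq_diffs n S hn, length_diffs]
  simp

lemma diffs_append (p a : ℕ) (l1 l2 : List ℕ) :
    diffs p (l1 ++ a :: l2) = diffs p (l1 ++ [a]) ++ diffs a l2 := by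
  induction l1 generalizing p with
  | nil => rfl
  | cons b l1 ih => simp [diffs, ih]

lemma diffs_map_add (p s : ℕ) (l : List ℕ) :
    diffs (p + s) (l.map (· + s)) = diffs p l := by
  induction l generalizing p with
  | nil => rfl
  | cons a l ih => simp only [List.map, diffs, Nat.add_sub_add_right, ih]

lemma sort_split {s : ℕ} (T1 T2 : Finset ℕ)
    (h1 : ∀ a ∈ T1, a < s) (h2 : ∀ a ∈ T2, 0 < a) :
    (T1 ∪ insert s (T2.image (· + s))).sort (· ≤ ·)
      = T1.sort (· ≤ ·) ++ s :: (T2.sort (· ≤ ·)).map (· + s) := by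
  have himg : (T2.image (· + s)).sort (· ≤ ·) = (T2.sort (· ≤ ·)).map (· + s) :=
    sort_image_strictMono (fun a b h => by simpa using h) T2
  have cond2 : ∀ a ∈ ({s} : Finset ℕ), ∀ b ∈ T2.image (· + s), a < b := by
    intro a ha b hb
    simp only [Finset.mem_image] at hb
    obtain ⟨t, ht, rfl⟩ := hb
    simp only [Finset.mem_singleton] at ha
    subst ha
    have := h2 t ht; omega
  have cond1 : ∀ a ∈ T1, ∀ b ∈ ({s} : Finset ℕ) ∪ T2.image (· + s), a < b := by
    intro a ha b hb
    have ha' := h1 a ha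
    simp only [Finset.mem_union, Finset.mem_singleton, Finset.mem_image] at hb
    rcases hb with rfl | ⟨t, ht, rfl⟩
    · exact ha'
    · omega
  rw [Finset.insert_eq, sort_union cond1, sort_union cond2, Finset.sort_singleton, himg,
    List.singleton_append]

lemma compOf_concat {n s : ℕ} (hs0 : 0 < s) (hsn : s < n) (T1 T2 : Finset ℕ)
    (h1 : ∀ a ∈ T1, a < s) (h2 : ∀ a ∈ T2, 0 < a) :
    compOf n (T1 ∪ insert s (T2.image (· + s))) = compOf s T1 ++ compOf (n - s) T2 := by
  rw [compOf_eq_diffs _ _ (by omega), compOf_eq_diffs _ _ (by omega),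
    compOf_eq_diffs _ _ (by omega)]
  rw [sort_split T1 T2 h1 h2]
  have : (T1.sort (· ≤ ·) ++ s :: (T2.sort (· ≤ ·)).map (· + s)) ++ [n]
      = T1.sort (· ≤ ·) ++ s :: ((T2.sort (· ≤ ·)).map (· + s) ++ [n]) := by
    simp
  rw [this, diffs_append]
  congr 1
  have hn : (T2.sort (· ≤ ·)).map (· + s) ++ [n] = (T2.sort (· ≤ ·) ++ [n - s]).map (· + s) := by
    simp; omega
  rw [hn]
  have hd := diffs_map_add 0 s (T2.sort (· ≤ ·) ++ [n - s])
  rw [zero_add] at hd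
  rw [hd]


lemma coeff_Mqs {σ : Type} [LinearOrder σ] {F : Type} [CommRing F] (P : σ → Prop)
    (w : List ℕ) (d : σ →₀ ℕ) :
    MvPowerSeries.coeff d (Mqs σ F P w) =
      if (∀ i ∈ d.support, P i) ∧ (d.support.sort (· ≤ ·)).map (fun i => d i) = w then 1 else 0 :=
  rfl

lemma Mqs_nil (σ : Type) [LinearOrder σ] (F : Type) [CommRing F] (P : σ → Prop) :
    Mqs σ F P [] = 1 := by
  apply MvPowerSeries.ext; intro d
  rw [coeff_Mqs, MvPowerSeries.coeff_one]
  by_cases hd : d = 0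
  · subst hd
    rw [if_pos rfl, if_pos]
    simp
  · rw [if_neg hd, if_neg]
    rintro ⟨-, h⟩
    apply hd
    rw [List.map_eq_nil_iff] at h
    have : d.support = ∅ := by
      by_contra hne
      obtain ⟨a, ha⟩ := Finset.nonempty_iff_ne_empty.mpr hne
      have := Finset.mem_sort (α := σ) (· ≤ ·) |>.mpr ha
      rw [h] at this
      simp at this
    exact Finsupp.support_eq_empty.mp this

end Aux


section Split
open Finset List

lemma PLft_or_PRgt (s : Sig2) : PLft s ∨ PRgt s := by
  rcases s with x | y
  · left; rfl
  · right; rfl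

lemma not_PLft_and_PRgt (s : Sig2) : ¬ (PLft s ∧ PRgt s) := by
  rcases s with x | y
  · rintro ⟨-, h⟩; exact Bool.noConfusion h
  · rintro ⟨h, -⟩; exact Bool.noConfusion h

lemma lt_of_PLft_PRgt {a b : Sig2} (ha : PLft a) (hb : PRgt b) : a < b := by
  rcases a with x | x
  · rcases b with y | y
    · exact absurd hb (by rintro h; exact Bool.noConfusion h)
    · exact Sum.Lex.inl_lt_inr x y
  · exact absurd ha (by rintro h; exact Bool.noConfusion h)

/-- left part of a `Sig2`-indexed finsupp -/
def dLeft (d : Sig2 →₀ ℕ) : Sig2 →₀ ℕ := d.filter PLft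

/-- right part -/
def dRight (d : Sig2 →₀ ℕ) : Sig2 →₀ ℕ := d.filter PRgt

lemma dLeft_add_dRight (d : Sig2 →₀ ℕ) : dLeft d + dRight d = d := by
  ext a
  rw [Finsupp.add_apply]
  rcases PLft_or_PRgt a with h | h
  · rw [dLeft, dRight, Finsupp.filter_apply_pos _ _ h, Finsupp.filter_apply_neg, add_zero]
    intro h2; exact not_PLft_and_PRgt a ⟨h, h2⟩
  · rw [dLeft, dRight, Finsupp.filter_apply_pos _ _ h, Finsupp.filter_apply_neg, zero_add]
    intro h2; exact not_PLft_and_PRgt a ⟨h2, h⟩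

lemma mem_support_dLeft {d : Sig2 →₀ ℕ} {a : Sig2} (h : a ∈ (dLeft d).support) : PLft a := by
  rw [dLeft, Finsupp.support_filter, Finset.mem_filter] at h
  exact h.2

lemma mem_support_dRight {d : Sig2 →₀ ℕ} {a : Sig2} (h : a ∈ (dRight d).support) : PRgt a := by
  rw [dRight, Finsupp.support_filter, Finset.mem_filter] at h
  exact h.2

lemma support_split (d : Sig2 →₀ ℕ) : d.support = (dLeft d).support ∪ (dRight d).support := by
  ext a
  rw [dLeft, dRight, Finsupp.support_filter, Finsupp.support_filter, Finset.mem_union,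
    Finset.mem_filter, Finset.mem_filter]
  rcases PLft_or_PRgt a with h | h <;> tauto

lemma sort_support_split (d : Sig2 →₀ ℕ) :
    d.support.sort (· ≤ ·)
      = (dLeft d).support.sort (· ≤ ·) ++ (dRight d).support.sort (· ≤ ·) := by
  refine sort_eq_of_sorted ?_ ?_
  · rw [List.pairwise_append]
    refine ⟨(Finset.sortedLT_sort _).pairwise, (Finset.sortedLT_sort _).pairwise, fun a ha b hb => ?_⟩
    rw [Finset.mem_sort] at ha hb
    exact lt_of_PLft_PRgt (mem_support_dLeft ha) (mem_support_dRight hb)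
  · ext a
    have := support_split d
    simp only [List.toFinset_append, Finset.mem_union, Finset.sort_toFinset, List.mem_toFinset,
      List.mem_append, Finset.mem_sort]
    rw [this, Finset.mem_union]

lemma vals_split (d : Sig2 →₀ ℕ) :
    (d.support.sort (· ≤ ·)).map (fun i => d i)
      = ((dLeft d).support.sort (· ≤ ·)).map (fun i => dLeft d i)
        ++ ((dRight d).support.sort (· ≤ ·)).map (fun i => dRight d i) := by
  rw [sort_support_split d, List.map_append]
  congr 1
  · apply List.map_congr_left
    intro a ha
    rw [Finset.mem_sort] at ha
    exact (Finsupp.filter_apply_pos _ _ (mem_support_dLeft ha)).symm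
  · apply List.map_congr_left
    intro a ha
    rw [Finset.mem_sort] at ha
    exact (Finsupp.filter_apply_pos _ _ (mem_support_dRight ha)).symm

lemma sum_indicator_split {F : Type} [CommRing F] (u v w : List ℕ) :
    (if u ++ v = w then (1 : F) else 0)
      = ∑ k ∈ Finset.range (w.length + 1),
          (if u = w.take k then (1 : F) else 0) * (if v = w.drop k then 1 else 0) := by
  by_cases h : u ++ v = w
  · subst h
    rw [if_pos rfl, Finset.sum_eq_single_of_mem u.length (by simp [Finset.mem_range])]
    · rw [if_pos (by simp [List.take_left]), if_pos (by simp [List.drop_left]), one_mul]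
    · intro k hk hne
      rw [Finset.mem_range] at hk
      by_cases h1 : u = (u ++ v).take k
      · exfalso
        apply hne
        have h2 := congrArg List.length h1
        rw [List.length_take, List.length_append] at h2
        rw [List.length_append] at hk
        omega
      · rw [if_neg h1, zero_mul]
  · rw [if_neg h]
    symm
    apply Finset.sum_eq_zero
    intro k hk
    by_cases h1 : u = w.take k
    · by_cases h2 : v = w.drop k
      · exfalso; apply h; rw [h1, h2, List.take_append_drop]
      · rw [if_neg h2, mul_zero]
    · rw [if_neg h1, zero_mul]

lemma Mqs_split (F : Type) [CommRing F] (w : List ℕ) :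
    Mqs Sig2 F PTot w
      = ∑ k ∈ Finset.range (w.length + 1),
          Mqs Sig2 F PLft (w.take k) * Mqs Sig2 F PRgt (w.drop k) := by
  apply MvPowerSeries.ext; intro d
  rw [map_sum]
  have hprod : ∀ k,
      MvPowerSeries.coeff d (Mqs Sig2 F PLft (w.take k) * Mqs Sig2 F PRgt (w.drop k))
        = MvPowerSeries.coeff (dLeft d) (Mqs Sig2 F PLft (w.take k)) *
            MvPowerSeries.coeff (dRight d) (Mqs Sig2 F PRgt (w.drop k)) := by
    intro k
    rw [MvPowerSeries.coeff_mul]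
    apply Finset.sum_eq_single_of_mem (dLeft d, dRight d)
    · rw [Finset.HasAntidiagonal.mem_antidiagonal]; exact dLeft_add_dRight d
    · rintro ⟨d1, d2⟩ hmem hne
      rw [Finset.HasAntidiagonal.mem_antidiagonal] at hmem
      by_contra hz
      have h1 : MvPowerSeries.coeff d1 (Mqs Sig2 F PLft (w.take k)) ≠ 0 := fun h => hz (by rw [h, zero_mul])
      have h2 : MvPowerSeries.coeff d2 (Mqs Sig2 F PRgt (w.drop k)) ≠ 0 := fun h => hz (by rw [h, mul_zero])
      rw [coeff_Mqs] at h1 h2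
      have hc1 : ∀ i ∈ d1.support, PLft i := by
        by_contra hc; rw [if_neg (fun hh => hc hh.1)] at h1; exact h1 rfl
      have hc2 : ∀ i ∈ d2.support, PRgt i := by
        by_contra hc; rw [if_neg (fun hh => hc hh.1)] at h2; exact h2 rfl
      apply hne
      have key : d1 = dLeft d ∧ d2 = dRight d := by
        constructor <;> ext a <;> rcases PLft_or_PRgt a with h | h
        · have hd2 : d2 a = 0 := by
            by_contra hz2
            exact not_PLft_and_PRgt a ⟨h, hc2 a (Finsupp.mem_support_iff.mpr hz2)⟩
          have := congrArg (fun f => f a) hmem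
          simp only [Finsupp.add_apply] at this
          rw [dLeft, Finsupp.filter_apply_pos _ _ h]
          omega
        · have hd1 : d1 a = 0 := by
            by_contra hz1
            exact not_PLft_and_PRgt a ⟨hc1 a (Finsupp.mem_support_iff.mpr hz1), h⟩
          rw [hd1, dLeft, Finsupp.filter_apply_neg]
          intro h2'; exact not_PLft_and_PRgt a ⟨h2', h⟩
        · have hd2 : d2 a = 0 := by
            by_contra hz2
            exact not_PLft_and_PRgt a ⟨h, hc2 a (Finsupp.mem_support_iff.mpr hz2)⟩
          rw [hd2, dRight, Finsupp.filter_apply_neg]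
          intro h2'; exact not_PLft_and_PRgt a ⟨h, h2'⟩
        · have hd1 : d1 a = 0 := by
            by_contra hz1
            exact not_PLft_and_PRgt a ⟨hc1 a (Finsupp.mem_support_iff.mpr hz1), h⟩
          have := congrArg (fun f => f a) hmem
          simp only [Finsupp.add_apply] at this
          rw [dRight, Finsupp.filter_apply_pos _ _ h]
          omega
      rw [key.1, key.2]
  simp only [hprod]
  have hL : ∀ k, MvPowerSeries.coeff (dLeft d) (Mqs Sig2 F PLft (w.take k))
      = if ((dLeft d).support.sort (· ≤ ·)).map (fun i => dLeft d i) = w.take k then (1:F) else 0 := by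
    intro k
    rw [coeff_Mqs, if_congr (and_iff_right (fun i hi => mem_support_dLeft hi)) rfl rfl]
  have hR : ∀ k, MvPowerSeries.coeff (dRight d) (Mqs Sig2 F PRgt (w.drop k))
      = if ((dRight d).support.sort (· ≤ ·)).map (fun i => dRight d i) = w.drop k then (1:F) else 0 := by
    intro k
    rw [coeff_Mqs, if_congr (and_iff_right (fun i hi => mem_support_dRight hi)) rfl rfl]
  simp only [hL, hR]
  have htot : ∀ i ∈ d.support, PTot i := fun i _ => trivial
  rw [coeff_Mqs, if_congr (and_iff_right htot) rfl rfl, vals_split d]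
  exact sum_indicator_split _ _ _

end Split


section CompLemmas
open Finset List

lemma sum_take_mono (δ : List ℕ) {i i' : ℕ} (h : i ≤ i') :
    (δ.take i).sum ≤ (δ.take i').sum := by
  have ht := List.take_add (l := δ) (i := i) (j := i' - i)
  rw [show i + (i' - i) = i' by omega] at ht
  rw [ht, List.sum_append]
  omega

lemma sum_take_lt {δ : List ℕ} (hδ : IsComp δ) {i i' : ℕ} (h : i < i') (h' : i' ≤ δ.length) :
    (δ.take i).sum < (δ.take i').sum := by
  have h1 : (δ.take (i+1)).sum ≤ (δ.take i').sum := sum_take_mono δ (by omega)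
  have hi : i < δ.length := by omega
  have h2 := List.sum_take_succ δ i hi
  have h3 : 0 < δ[i] := hδ _ (List.getElem_mem hi)
  omega

lemma mem_setComp {δ : List ℕ} {x : ℕ} :
    x ∈ setComp δ ↔ ∃ i, i < δ.length - 1 ∧ (δ.take (i+1)).sum = x := by
  simp [setComp, Finset.mem_image, Finset.mem_range]

lemma setComp_pos {δ : List ℕ} (hδ : IsComp δ) {x : ℕ} (hx : x ∈ setComp δ) : 0 < x := by
  obtain ⟨i, hi, rfl⟩ := mem_setComp.mp hx
  have := sum_take_lt hδ (show 0 < i + 1 by omega) (by omega)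
  simpa using this

lemma setComp_lt_sum {δ : List ℕ} (hδ : IsComp δ) {x : ℕ} (hx : x ∈ setComp δ) : x < δ.sum := by
  obtain ⟨i, hi, rfl⟩ := mem_setComp.mp hx
  have := sum_take_lt hδ (show i + 1 < δ.length by omega) (le_refl _)
  rwa [List.take_length] at this

lemma card_setComp {δ : List ℕ} (hδ : IsComp δ) : (setComp δ).card = δ.length - 1 := by
  rw [setComp, Finset.card_image_of_injOn, Finset.card_range]
  intro i hi i' hi' hii
  simp only [Finset.coe_range, Set.mem_Iio] at hi hi'
  have hii' : (δ.take (i+1)).sum = (δ.take (i'+1)).sum := hii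
  clear hii
  by_contra hne
  rcases Nat.lt_or_ge i i' with hlt | hge
  · have := sum_take_lt hδ (show i + 1 < i' + 1 by omega) (by omega)
    omega
  · rcases Nat.eq_or_lt_of_le hge with h | h
    · omega
    · have := sum_take_lt hδ (show i' + 1 < i + 1 by omega) (by omega)
      omega

lemma setComp_take {γ : List ℕ} (hγ : IsComp γ) {j : ℕ} (hj : j ≤ γ.length) :
    setComp (γ.take j) = (setComp γ).filter (· < (γ.take j).sum) := by
  ext x
  rw [mem_setComp, Finset.mem_filter, mem_setComp]
  have hlen : (γ.take j).length = j := by rw [List.length_take]; omega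
  constructor
  · rintro ⟨i, hi, rfl⟩
    rw [hlen] at hi
    rw [List.take_take, show min (i+1) j = i + 1 by omega]
    exact ⟨⟨i, by omega, rfl⟩, sum_take_lt hγ (by omega) hj⟩
  · rintro ⟨⟨i, hi, rfl⟩, hlt⟩
    have hij : i + 1 < j := by
      by_contra hc
      have := sum_take_mono γ (show j ≤ i + 1 by omega)
      omega
    refine ⟨i, by rw [hlen]; omega, ?_⟩
    rw [List.take_take, show min (i+1) j = i + 1 by omega]

lemma setComp_drop {γ : List ℕ} (hγ : IsComp γ) {j : ℕ} (hj : j ≤ γ.length) :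
    setComp (γ.drop j)
      = ((setComp γ).filter (fun x => (γ.take j).sum < x)).image (fun x => x - (γ.take j).sum) := by
  have key : ∀ i, (γ.take (j + (i+1))).sum = (γ.take j).sum + ((γ.drop j).take (i+1)).sum := by
    intro i
    rw [List.take_add (l := γ) (i := j) (j := i+1), List.sum_append]
  ext x
  rw [mem_setComp]
  simp only [Finset.mem_image, Finset.mem_filter]
  constructor
  · rintro ⟨i, hi, rfl⟩
    rw [List.length_drop] at hi
    have hd : IsComp (γ.drop j) := fun a ha => hγ a (List.drop_subset j γ ha)
    have hpos : 0 < ((γ.drop j).take (i+1)).sum := by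
      have := sum_take_lt hd (show 0 < i + 1 by omega) (by rw [List.length_drop]; omega)
      simpa using this
    have hk := key i
    refine ⟨(γ.take (j + (i+1))).sum,
      ⟨mem_setComp.mpr ⟨j + i, by omega, by rw [show j + i + 1 = j + (i+1) by omega]⟩, by omega⟩,
      by omega⟩
  · rintro ⟨y, ⟨hy, hlt⟩, rfl⟩
    obtain ⟨i', hi', rfl⟩ := mem_setComp.mp hy
    have hij : j < i' + 1 := by
      by_contra hc
      have := sum_take_mono γ (show i' + 1 ≤ j by omega)
      omega
    refine ⟨i' - j, by rw [List.length_drop]; omega, ?_⟩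
    have hk := key (i' - j)
    rw [show j + (i' - j + 1) = i' + 1 by omega] at hk
    omega

lemma jOf_ps {γ : List ℕ} (hγ : IsComp γ) {m : ℕ} (hm : m ≤ γ.length) :
    ((Finset.range γ.length).filter (fun i => (γ.take (i+1)).sum ≤ (γ.take m).sum)).card = m := by
  have heq : (Finset.range γ.length).filter (fun i => (γ.take (i+1)).sum ≤ (γ.take m).sum)
      = Finset.range m := by
    ext i
    simp only [Finset.mem_filter, Finset.mem_range]
    constructor
    · rintro ⟨hi, hle⟩
      by_contra hc
      have := sum_take_lt hγ (show m < i + 1 by omega) (by omega)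
      omega
    · intro him
      exact ⟨by omega, sum_take_mono γ (by omega)⟩
  rw [heq, Finset.card_range]

lemma card_filter_lt_sort {T : Finset ℕ} {k : ℕ} (hk : k < (T.sort (· ≤ ·)).length) :
    (T.filter (· < (T.sort (· ≤ ·)).getD k 0)).card = k := by
  set l := T.sort (· ≤ ·) with hl
  have hnd : l.Nodup := Finset.sort_nodup T _
  have hs : l.Pairwise (· < ·) := (Finset.sortedLT_sort T).pairwise
  have hmono : ∀ {i1 i2 : ℕ} (h1 : i1 < l.length) (h2 : i2 < l.length), i1 < i2 → l[i1] < l[i2] := by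
    intro i1 i2 h1 h2 h12
    have := hs.sortedLT.strictMono_get (Fin.mk_lt_mk.mpr h12 : (⟨i1, h1⟩ : Fin l.length) < ⟨i2, h2⟩)
    simpa [List.get_eq_getElem] using this
  have heq : T.filter (· < l.getD k 0) = (l.take k).toFinset := by
    ext x
    rw [Finset.mem_filter, List.mem_toFinset, List.getD_eq_getElem l 0 hk]
    constructor
    · rintro ⟨hxT, hxlt⟩
      obtain ⟨i, hi, rfl⟩ := List.mem_iff_getElem.mp ((Finset.mem_sort (α := ℕ) (· ≤ ·)).mpr hxT)
      have hik : i < k := by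
        by_contra hc
        rcases Nat.eq_or_lt_of_le (Nat.le_of_not_lt hc) with h | h
        · subst h
          exact lt_irrefl _ hxlt
        · exact absurd hxlt (not_lt.mpr (le_of_lt (hmono hk hi h)))
      have hitake : i < (l.take k).length := by
        rw [List.length_take]
        omega
      have hgo : (l.take k)[i] = l[i] := List.getElem_take
      rw [← hgo]
      exact List.getElem_mem _
    · intro hx
      refine ⟨(Finset.mem_sort (α := ℕ) (· ≤ ·)).mp (List.take_subset k l hx), ?_⟩
      obtain ⟨i, hi, rfl⟩ := List.mem_iff_getElem.mp hx
      have hik : i < k := by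
        rw [List.length_take] at hi
        omega
      have hil : i < l.length := by
        rw [List.length_take] at hi
        omega
      rw [List.getElem_take]
      exact hmono hil hk hik
  rw [heq, List.toFinset_card_of_nodup ((List.take_sublist k l).nodup hnd), List.length_take]
  omega

end CompLemmas

section Main
open Finset List

/-- coefficient in the expansion of `D_α(q,t)` -/
def coefD {F : Type} [Field F] (q t : F) (α : List ℕ) (T : Finset ℕ) : F :=
  if α = [] then 1
  else q ^ ((T.card + 1 : ℤ) - (α.sum : ℤ)) * (-t) ^ (α.length - (T.card + 1))

lemma Dqt_eq (σ : Type) [LinearOrder σ] (F : Type) [Field F] (P : σ → Prop) (q t : F)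
    (α : List ℕ) :
    Dqt σ F P q t α
      = ∑ T ∈ (setComp α).powerset, coefD q t α T • Mqs σ F P (compOf α.sum T) := by
  by_cases h : α = []
  · subst h
    have h1 : setComp ([] : List ℕ) = ∅ := by simp [setComp]
    rw [Dqt, if_pos rfl, h1, Finset.powerset_empty, Finset.sum_singleton, coefD, if_pos rfl]
    have h2 : compOf ([] : List ℕ).sum ∅ = [] := by simp [compOf]
    rw [h2, Mqs_nil, one_smul]
  · rw [Dqt, if_neg h]
    refine Finset.sum_congr rfl (fun T hT => ?_)
    rw [coefD, if_neg h]

lemma qv_ne_zero : qv ≠ 0 := by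
  intro h
  have hinj := IsFractionRing.injective (MvPolynomial (Fin 2) ℂ) Fqt
  have : (MvPolynomial.X 0 : MvPolynomial (Fin 2) ℂ) = 0 := by
    apply hinj
    rw [map_zero]
    exact h
  exact MvPolynomial.X_ne_zero 0 this

/-- forward map of the index bijection -/
def PhiFun (γ : List ℕ) (b : Σ _ : ℕ, Finset ℕ × Finset ℕ) : Σ _ : Finset ℕ, ℕ :=
  if b.1 = 0 then ⟨b.2.2, 0⟩
  else if b.1 = γ.length then ⟨b.2.1, b.2.1.card + 1⟩
  else ⟨b.2.1 ∪ insert ((γ.take b.1).sum) (b.2.2.image (· + (γ.take b.1).sum)),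
    b.2.1.card + 1⟩

/-- backward map of the index bijection -/
def PsiFun (γ : List ℕ) (a : Σ _ : Finset ℕ, ℕ) : Σ _ : ℕ, Finset ℕ × Finset ℕ :=
  ⟨((Finset.range γ.length).filter
      (fun i => (γ.take (i+1)).sum ≤ (0 :: (a.1.sort (· ≤ ·) ++ [γ.sum])).getD a.2 0)).card,
   (a.1.filter (· < (0 :: (a.1.sort (· ≤ ·) ++ [γ.sum])).getD a.2 0),
    (a.1.filter (fun x => (0 :: (a.1.sort (· ≤ ·) ++ [γ.sum])).getD a.2 0 < x)).image
      (fun x => x - (0 :: (a.1.sort (· ≤ ·) ++ [γ.sum])).getD a.2 0))⟩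

lemma sigmaProd_eq {j j' : ℕ} {a a' b b' : Finset ℕ} (h1 : j = j') (h2 : a = a') (h3 : b = b') :
    (⟨j, (a, b)⟩ : Σ _ : ℕ, Finset ℕ × Finset ℕ) = ⟨j', (a', b')⟩ := by
  subst h1; subst h2; subst h3; rfl

lemma sigmaFin_eq {T T' : Finset ℕ} {k k' : ℕ} (h1 : T = T') (h2 : k = k') :
    (⟨T, k⟩ : Σ _ : Finset ℕ, ℕ) = ⟨T', k'⟩ := by
  subst h1; subst h2; rfl

variable {γ : List ℕ}

lemma T1_prop (hγ : IsComp γ) {j : ℕ} (hj : j ≤ γ.length) {T1 : Finset ℕ}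
    (h1 : T1 ⊆ setComp (γ.take j)) :
    ∀ x ∈ T1, x < (γ.take j).sum ∧ x ∈ setComp γ := by
  intro x hx
  have := h1 hx
  rw [setComp_take hγ hj, Finset.mem_filter] at this
  exact ⟨this.2, this.1⟩

lemma T2_prop (hγ : IsComp γ) {j : ℕ} (hj : j ≤ γ.length) {T2 : Finset ℕ}
    (h2 : T2 ⊆ setComp (γ.drop j)) :
    ∀ x ∈ T2, 0 < x ∧ x + (γ.take j).sum ∈ setComp γ := by
  intro x hx
  have := h2 hx
  rw [setComp_drop hγ hj] at this
  simp only [Finset.mem_image, Finset.mem_filter] at this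
  obtain ⟨z, ⟨hz, hlt⟩, rfl⟩ := this
  refine ⟨by omega, ?_⟩
  rw [show z - (γ.take j).sum + (γ.take j).sum = z by omega]
  exact hz

lemma ps_mem_setComp (hγ : IsComp γ) {j : ℕ} (h0 : 0 < j) (hjL : j < γ.length) :
    (γ.take j).sum ∈ setComp γ :=
  mem_setComp.mpr ⟨j - 1, by omega, by rw [show j - 1 + 1 = j by omega]⟩

lemma take_sum_lt_sum (hγ : IsComp γ) {j : ℕ} (hjL : j < γ.length) :
    (γ.take j).sum < γ.sum := by
  have := sum_take_lt hγ hjL (le_refl γ.length)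
  rwa [List.take_length] at this

lemma sum_drop_eq (γ : List ℕ) (j : ℕ) : (γ.take j).sum + (γ.drop j).sum = γ.sum := by
  rw [← List.sum_append, List.take_append_drop]

/-- the relevant `getD` values -/
lemma getD_zero (T : Finset ℕ) (n : ℕ) : (0 :: (T.sort (· ≤ ·) ++ [n])).getD 0 0 = 0 := rfl

lemma getD_last (T : Finset ℕ) (n : ℕ) :
    (0 :: (T.sort (· ≤ ·) ++ [n])).getD (T.card + 1) 0 = n := by
  rw [List.getD_cons_succ, List.getD_append_right _ _ _ _ (by simp)]
  simp

lemma getD_mid (T : Finset ℕ) (n : ℕ) {k : ℕ} (hk : k < T.card) :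
    (0 :: (T.sort (· ≤ ·) ++ [n])).getD (k + 1) 0 = (T.sort (· ≤ ·)).getD k 0 := by
  rw [List.getD_cons_succ, List.getD_append _ _ _ _ (by simp [hk])]

lemma getD_mid_mem (T : Finset ℕ) {k : ℕ} (hk : k < T.card) :
    (T.sort (· ≤ ·)).getD k 0 ∈ T := by
  rw [List.getD_eq_getElem _ _ (by simp [hk])]
  exact (Finset.mem_sort _).mp (List.getElem_mem _)

end Main

section Bij
open Finset List

variable {γ : List ℕ}

lemma setComp_nil : setComp ([] : List ℕ) = ∅ := by simp [setComp]

lemma phi_mem (hγ : IsComp γ) {j : ℕ} {T1 T2 : Finset ℕ}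
    (hj : j ≤ γ.length) (h1 : T1 ⊆ setComp (γ.take j)) (h2 : T2 ⊆ setComp (γ.drop j)) :
    PhiFun γ ⟨j, (T1, T2)⟩
      ∈ ((setComp γ).powerset).sigma (fun T => Finset.range (T.card + 2)) := by
  simp only [PhiFun]
  split_ifs with h0 hLL
  · simp only [Finset.mem_sigma, Finset.mem_powerset, Finset.mem_range]
    subst h0
    constructor
    · intro x hx
      have := h2 hx
      rwa [List.drop_zero] at this
    · omega
  · simp only [Finset.mem_sigma, Finset.mem_powerset, Finset.mem_range]
    subst hLL
    constructor
    · intro x hx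
      have := h1 hx
      rwa [List.take_length] at this
    · omega
  · simp only [Finset.mem_sigma, Finset.mem_powerset, Finset.mem_range]
    have hjL : j < γ.length := by omega
    constructor
    · intro x hx
      simp only [Finset.mem_union, Finset.mem_insert, Finset.mem_image] at hx
      rcases hx with hx | (rfl | ⟨y, hy, rfl⟩)
      · exact (T1_prop hγ hj h1 x hx).2
      · exact ps_mem_setComp hγ (by omega) hjL
      · exact (T2_prop hγ hj h2 y hy).2
    · have hsub : T1 ⊆ T1 ∪ insert ((γ.take j).sum) (T2.image (· + (γ.take j).sum)) :=
        Finset.subset_union_left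
      have := Finset.card_le_card hsub
      omega

lemma psi_mem (hγ : IsComp γ) {T : Finset ℕ} {k : ℕ}
    (hT : T ⊆ setComp γ) (hk : k < T.card + 2) :
    PsiFun γ ⟨T, k⟩ ∈ (Finset.range (γ.length + 1)).sigma
      (fun j => (setComp (γ.take j)).powerset ×ˢ (setComp (γ.drop j)).powerset) := by
  have hex : ∃ m, m ≤ γ.length ∧
      (γ.take m).sum = (0 :: (T.sort (· ≤ ·) ++ [γ.sum])).getD k 0 := by
    rcases Nat.lt_or_ge k (T.card + 1) with hk1 | hk2
    · rcases Nat.eq_zero_or_pos k with rfl | hk0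
      · exact ⟨0, by omega, by simp [getD_zero]⟩
      · obtain ⟨k', rfl⟩ : ∃ k', k = k' + 1 := ⟨k - 1, by omega⟩
        have hks : k' < T.card := by omega
        rw [getD_mid T γ.sum hks]
        obtain ⟨i, hi, hieq⟩ := mem_setComp.mp (hT (getD_mid_mem T hks))
        exact ⟨i + 1, by omega, hieq⟩
    · have hkeq : k = T.card + 1 := by omega
      subst hkeq
      rw [getD_last]
      exact ⟨γ.length, le_refl _, by rw [List.take_length]⟩
  obtain ⟨m, hm, hps⟩ := hex
  simp only [PsiFun, Finset.mem_sigma, Finset.mem_range, Finset.mem_product,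
    Finset.mem_powerset]
  have hj : ((Finset.range γ.length).filter
      (fun i => (γ.take (i+1)).sum ≤ (0 :: (T.sort (· ≤ ·) ++ [γ.sum])).getD k 0)).card = m := by
    rw [← hps]
    exact jOf_ps hγ hm
  rw [hj]
  refine ⟨by omega, ?_, ?_⟩
  · intro x hx
    rw [Finset.mem_filter] at hx
    rw [setComp_take hγ hm, Finset.mem_filter]
    exact ⟨hT hx.1, by rw [hps]; exact hx.2⟩
  · intro x hx
    simp only [Finset.mem_image, Finset.mem_filter] at hx
    obtain ⟨y, ⟨hyT, hy⟩, rfl⟩ := hx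
    rw [setComp_drop hγ hm]
    simp only [Finset.mem_image, Finset.mem_filter]
    exact ⟨y, ⟨hT hyT, by rw [hps]; exact hy⟩, by rw [hps]⟩

lemma psi_phi (hγ : IsComp γ) (hnil : γ ≠ []) {j : ℕ} {T1 T2 : Finset ℕ}
    (hj : j ≤ γ.length) (h1 : T1 ⊆ setComp (γ.take j)) (h2 : T2 ⊆ setComp (γ.drop j)) :
    PsiFun γ (PhiFun γ ⟨j, (T1, T2)⟩) = ⟨j, (T1, T2)⟩ := by
  have hLpos : 0 < γ.length := List.length_pos_iff.mpr hnil
  simp only [PhiFun]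
  split_ifs with h0 hLL
  · -- j = 0
    subst h0
    simp only [PsiFun]
    have hs : (0 :: (T2.sort (· ≤ ·) ++ [γ.sum])).getD 0 0 = 0 := rfl
    rw [hs]
    have hT1 : T1 = ∅ := by
      rw [← Finset.subset_empty, ← setComp_nil]
      simpa using h1
    have hT2pos : ∀ x ∈ T2, 0 < x := by
      intro x hx
      have := h2 hx
      rw [List.drop_zero] at this
      exact setComp_pos hγ this
    refine sigmaProd_eq ?_ ?_ ?_
    · simpa using jOf_ps hγ (Nat.zero_le γ.length)
    · rw [hT1]
      exact Finset.filter_false_of_mem (fun x _ => by omega)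
    · rw [Finset.filter_eq_self.mpr (fun x hx => hT2pos x hx)]
      ext x
      simp only [Finset.mem_image]
      constructor
      · rintro ⟨y, hy, rfl⟩
        simpa using hy
      · intro hx
        exact ⟨x, hx, Nat.sub_zero x⟩
  · -- j = γ.length
    subst hLL
    simp only [PsiFun]
    rw [getD_last]
    have hT1sub : T1 ⊆ setComp γ := by
      intro x hx
      have := h1 hx
      rwa [List.take_length] at this
    have hT2 : T2 = ∅ := by
      rw [← Finset.subset_empty, ← setComp_nil]
      simpa [List.drop_length] using h2
    refine sigmaProd_eq ?_ ?_ ?_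
    · have := jOf_ps hγ (le_refl γ.length)
      rwa [List.take_length] at this
    · exact Finset.filter_eq_self.mpr (fun x hx => setComp_lt_sum hγ (hT1sub hx))
    · rw [hT2, Finset.filter_false_of_mem (fun x hx => by
        have := setComp_lt_sum hγ (hT1sub hx); omega), Finset.image_empty]
  · -- middle
    have hj0 : 0 < j := by omega
    have hjL : j < γ.length := by omega
    have hT1lt : ∀ x ∈ T1, x < (γ.take j).sum := fun x hx => (T1_prop hγ hj h1 x hx).1
    have hT2pos : ∀ x ∈ T2, 0 < x := fun x hx => (T2_prop hγ hj h2 x hx).1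
    have hgd : (0 :: ((T1 ∪ insert ((γ.take j).sum)
        (T2.image (· + (γ.take j).sum))).sort (· ≤ ·) ++ [γ.sum])).getD (T1.card + 1) 0
        = (γ.take j).sum := by
      rw [List.getD_cons_succ, sort_split T1 T2 hT1lt hT2pos, List.append_assoc,
        List.cons_append, List.getD_append_right _ _ _ _ (by simp)]
      simp
    simp only [PsiFun]
    rw [hgd]
    refine sigmaProd_eq (jOf_ps hγ hj) ?_ ?_
    · ext x
      simp only [Finset.mem_filter, Finset.mem_union, Finset.mem_insert, Finset.mem_image]
      constructor
      · rintro ⟨hx | (rfl | ⟨y, hy, rfl⟩), hlt⟩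
        · exact hx
        · omega
        · exact absurd hlt (by omega)
      · intro hx
        exact ⟨Or.inl hx, hT1lt x hx⟩
    · ext x
      simp only [Finset.mem_image, Finset.mem_filter, Finset.mem_union, Finset.mem_insert]
      constructor
      · rintro ⟨y, ⟨hy | (rfl | ⟨z, hz, rfl⟩), hlt⟩, rfl⟩
        · exact absurd hlt (by have := hT1lt y hy; omega)
        · exact absurd hlt (lt_irrefl _)
        · rw [show z + (γ.take j).sum - (γ.take j).sum = z by omega]
          exact hz
      · intro hx
        refine ⟨x + (γ.take j).sum, ⟨Or.inr (Or.inr ⟨x, hx, rfl⟩), by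
          have := hT2pos x hx; omega⟩, by omega⟩

lemma phi_psi (hγ : IsComp γ) (hnil : γ ≠ []) {T : Finset ℕ} {k : ℕ}
    (hT : T ⊆ setComp γ) (hk : k < T.card + 2) :
    PhiFun γ (PsiFun γ ⟨T, k⟩) = ⟨T, k⟩ := by
  have hLpos : 0 < γ.length := List.length_pos_iff.mpr hnil
  rcases Nat.eq_zero_or_pos k with rfl | hk0
  · -- k = 0
    simp only [PsiFun]
    have hs : (0 :: (T.sort (· ≤ ·) ++ [γ.sum])).getD 0 0 = 0 := rfl
    rw [hs]
    have hj0 : ((Finset.range γ.length).filter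
        (fun i => (γ.take (i+1)).sum ≤ 0)).card = 0 := by
      simpa using jOf_ps hγ (Nat.zero_le γ.length)
    rw [hj0]
    simp only [PhiFun]
    rw [if_pos trivial]
    refine sigmaFin_eq ?_ rfl
    rw [Finset.filter_eq_self.mpr (fun x hx => setComp_pos hγ (hT hx))]
    ext x
    simp only [Finset.mem_image]
    constructor
    · rintro ⟨y, hy, rfl⟩
      simpa using hy
    · intro hx
      exact ⟨x, hx, Nat.sub_zero x⟩
  · rcases Nat.lt_or_ge k (T.card + 1) with hmid | hlast
    · -- middle
      obtain ⟨k', rfl⟩ : ∃ k', k = k' + 1 := ⟨k - 1, by omega⟩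
      have hks : k' < T.card := by omega
      simp only [PsiFun]
      rw [getD_mid T γ.sum hks]
      set s := (T.sort (· ≤ ·)).getD k' 0 with hsdef
      have hsT : s ∈ T := getD_mid_mem T hks
      have hsC : s ∈ setComp γ := hT hsT
      obtain ⟨i, hi, hieq⟩ := mem_setComp.mp hsC
      have hspos : 0 < s := setComp_pos hγ hsC
      have hjeq : ((Finset.range γ.length).filter
          (fun i => (γ.take (i+1)).sum ≤ s)).card = i + 1 := by
        rw [← hieq]
        exact jOf_ps hγ (by omega)
      rw [hjeq]
      simp only [PhiFun]
      rw [if_neg (by omega : ¬ i + 1 = 0), if_neg (by omega : ¬ i + 1 = γ.length)]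
      rw [hieq]
      refine sigmaFin_eq ?_ ?_
      · ext x
        simp only [Finset.mem_union, Finset.mem_filter, Finset.mem_insert, Finset.mem_image]
        constructor
        · rintro (⟨hxT, -⟩ | (rfl | ⟨y, ⟨z, ⟨hzT, hzlt⟩, rfl⟩, rfl⟩))
          · exact hxT
          · exact hsT
          · rwa [show z - s + s = z by omega]
        · intro hxT
          rcases Nat.lt_trichotomy x s with h | h | h
          · exact Or.inl ⟨hxT, h⟩
          · exact Or.inr (Or.inl h)
          · exact Or.inr (Or.inr ⟨x - s, ⟨x, ⟨hxT, h⟩, rfl⟩, by omega⟩)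
      · rw [hsdef, card_filter_lt_sort (by simp [hks] : k' < (T.sort (· ≤ ·)).length)]
    · -- k = T.card + 1
      have hkeq : k = T.card + 1 := by omega
      subst hkeq
      simp only [PsiFun]
      rw [getD_last]
      have hj : ((Finset.range γ.length).filter
          (fun i => (γ.take (i+1)).sum ≤ γ.sum)).card = γ.length := by
        have := jOf_ps hγ (le_refl γ.length)
        rwa [List.take_length] at this
      rw [hj]
      simp only [PhiFun]
      rw [if_neg (by omega : ¬ γ.length = 0), if_pos trivial]
      have hfil : T.filter (· < γ.sum) = T :=
        Finset.filter_eq_self.mpr (fun x hx => setComp_lt_sum hγ (hT hx))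
      exact sigmaFin_eq hfil (by rw [hfil])

end Bij

section Final
open Finset List

variable {γ : List ℕ}

lemma sum_pos_of_comp (hγ : IsComp γ) (hnil : γ ≠ []) : 0 < γ.sum := by
  have hLpos : 0 < γ.length := List.length_pos_iff.mpr hnil
  have := sum_take_lt hγ hLpos (le_refl γ.length)
  simpa [List.take_length] using this

lemma summand_eq (hγ : IsComp γ) (hnil : γ ≠ []) {j : ℕ} {T1 T2 : Finset ℕ}
    (hj : j ≤ γ.length) (h1 : T1 ⊆ setComp (γ.take j)) (h2 : T2 ⊆ setComp (γ.drop j)) :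
    (coefD qv tv (γ.take j) T1 * coefD qv tv (γ.drop j) T2) •
        (Mqs Sig2 Fqt PLft (compOf (γ.take j).sum T1) *
          Mqs Sig2 Fqt PRgt (compOf (γ.drop j).sum T2))
      = coefD qv tv γ (PhiFun γ ⟨j, (T1, T2)⟩).1 •
          (Mqs Sig2 Fqt PLft ((compOf γ.sum (PhiFun γ ⟨j, (T1, T2)⟩).1).take
              (PhiFun γ ⟨j, (T1, T2)⟩).2) *
            Mqs Sig2 Fqt PRgt ((compOf γ.sum (PhiFun γ ⟨j, (T1, T2)⟩).1).drop
              (PhiFun γ ⟨j, (T1, T2)⟩).2)) := by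
  have hLpos : 0 < γ.length := List.length_pos_iff.mpr hnil
  have hn : 0 < γ.sum := sum_pos_of_comp hγ hnil
  simp only [PhiFun]
  split_ifs with h0 hLL
  · -- j = 0
    subst h0
    dsimp only
    simp only [List.take_zero, List.drop_zero, List.sum_nil]
    rw [show compOf 0 T1 = [] from by simp [compOf],
      show coefD qv tv ([] : List ℕ) T1 = 1 from by rw [coefD, if_pos rfl],
      Mqs_nil, one_mul, one_mul]
  · -- j = γ.length
    subst hLL
    dsimp only
    simp only [List.take_length, List.drop_length, List.sum_nil]
    rw [show compOf 0 T2 = [] from by simp [compOf],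
      show coefD qv tv ([] : List ℕ) T2 = 1 from by rw [coefD, if_pos rfl],
      Mqs_nil, mul_one, mul_one]
    have hlen : (compOf γ.sum T1).length = T1.card + 1 := length_compOf _ _ (by omega)
    rw [show (compOf γ.sum T1).take (T1.card + 1) = compOf γ.sum T1 from by
        rw [← hlen, List.take_length],
      show (compOf γ.sum T1).drop (T1.card + 1) = [] from by
        rw [← hlen, List.drop_length],
      Mqs_nil, mul_one]
  · -- middle
    dsimp only
    have hj0 : 0 < j := by omega
    have hjL : j < γ.length := by omega
    have hs0 : 0 < (γ.take j).sum := by simpa using sum_take_lt hγ hj0 hj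
    have hsn : (γ.take j).sum < γ.sum := take_sum_lt_sum hγ hjL
    have hT1lt : ∀ x ∈ T1, x < (γ.take j).sum := fun x hx => (T1_prop hγ hj h1 x hx).1
    have hT2pos : ∀ x ∈ T2, 0 < x := fun x hx => (T2_prop hγ hj h2 x hx).1
    have hcc := compOf_concat hs0 hsn T1 T2 hT1lt hT2pos
    have hdropsum : (γ.drop j).sum = γ.sum - (γ.take j).sum := by
      have := sum_drop_eq γ j
      omega
    have hlen1 : (compOf (γ.take j).sum T1).length = T1.card + 1 :=
      length_compOf _ _ (by omega)
    rw [hcc, ← hlen1, List.take_left, List.drop_left, hdropsum]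
    congr 1
    -- coefficient identity
    have hcard : (T1 ∪ insert ((γ.take j).sum) (T2.image (· + (γ.take j).sum))).card
        = T1.card + T2.card + 1 := by
      have hdisj : Disjoint T1 (insert ((γ.take j).sum) (T2.image (· + (γ.take j).sum))) := by
        rw [Finset.disjoint_left]
        intro x hx hx2
        have hxlt := hT1lt x hx
        simp only [Finset.mem_insert, Finset.mem_image] at hx2
        rcases hx2 with rfl | ⟨y, hy, rfl⟩
        · omega
        · omega
      have hnm : (γ.take j).sum ∉ T2.image (· + (γ.take j).sum) := by
        simp only [Finset.mem_image]
        rintro ⟨y, hy, he⟩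
        have := hT2pos y hy
        omega
      rw [Finset.card_union_of_disjoint hdisj, Finset.card_insert_of_notMem hnm,
        Finset.card_image_of_injective _ (add_left_injective _)]
      omega
    have hlt : (γ.take j).length = j := by
      rw [List.length_take]
      omega
    have hld : (γ.drop j).length = γ.length - j := List.length_drop
    have htne : ¬ γ.take j = [] := by
      intro h
      rw [h] at hlt
      simp at hlt
      omega
    have hdne : ¬ γ.drop j = [] := by
      intro h
      rw [h] at hld
      simp at hld
      omega
    rw [coefD, coefD, coefD, if_neg hnil, if_neg htne, if_neg hdne]
    rw [mul_mul_mul_comm]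
    have hb1 : T1.card ≤ j - 1 := by
      have hcle := Finset.card_le_card h1
      rwa [card_setComp (fun a ha => hγ a (List.take_subset _ _ ha)), hlt] at hcle
    have hb2 : T2.card ≤ γ.length - j - 1 := by
      have hcle := Finset.card_le_card h2
      rwa [card_setComp (fun a ha => hγ a (List.drop_subset _ _ ha)), hld] at hcle
    congr 1
    · rw [← zpow_add₀ qv_ne_zero]
      congr 1
      rw [hcard]
      omega
    · rw [← pow_add]
      congr 1
      rw [hcard, hlt, hld]
      omega

end Final

set_option synthInstance.maxHeartbeats 1000000 in
set_option maxHeartbeats 2000000 in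
/-- the coproduct rule for `{D_γ(q,t)}` in two-alphabet form:
`D_γ(q,t)(x,y) = ∑_{α·β=γ} D_α(q,t)(x) · D_β(q,t)(y)`. -/
theorem statement11 (γ : List ℕ) (hγ : IsComp γ) :
    Dqt Sig2 Fqt PTot qv tv γ =
      ∑ᶠ (p : List ℕ × List ℕ) (_ : IsComp p.1 ∧ IsComp p.2 ∧ p.1 ++ p.2 = γ),
        Dqt Sig2 Fqt PLft qv tv p.1 * Dqt Sig2 Fqt PRgt qv tv p.2 := by
  have hset : {p : List ℕ × List ℕ | IsComp p.1 ∧ IsComp p.2 ∧ p.1 ++ p.2 = γ}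
      = ↑((Finset.range (γ.length + 1)).image (fun j => (γ.take j, γ.drop j))) := by
    ext p
    simp only [Set.mem_setOf_eq, Finset.coe_image, Set.mem_image, Finset.mem_coe,
      Finset.mem_range]
    constructor
    · rintro ⟨hp1, hp2, hp3⟩
      refine ⟨p.1.length, ?_, ?_⟩
      · have := congrArg List.length hp3
        simp only [List.length_append] at this
        omega
      · rw [← hp3, List.take_left, List.drop_left]
    · rintro ⟨j, hj, rfl⟩
      exact ⟨fun a ha => hγ a (List.take_subset j γ ha),
        fun a ha => hγ a (List.drop_subset j γ ha), List.take_append_drop j γ⟩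
  have hinj : ∀ j1 ∈ Finset.range (γ.length + 1), ∀ j2 ∈ Finset.range (γ.length + 1),
      (γ.take j1, γ.drop j1) = (γ.take j2, γ.drop j2) → j1 = j2 := by
    intro j1 hj1 j2 hj2 he
    rw [Finset.mem_range] at hj1 hj2
    have := congrArg (fun p : List ℕ × List ℕ => p.1.length) he
    simp only [List.length_take] at this
    omega
  have hfin : (∑ᶠ (p : List ℕ × List ℕ) (_ : IsComp p.1 ∧ IsComp p.2 ∧ p.1 ++ p.2 = γ),
        Dqt Sig2 Fqt PLft qv tv p.1 * Dqt Sig2 Fqt PRgt qv tv p.2)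
      = ∑ j ∈ Finset.range (γ.length + 1),
          Dqt Sig2 Fqt PLft qv tv (γ.take j) * Dqt Sig2 Fqt PRgt qv tv (γ.drop j) := by
    have h1 := congrArg (fun s : Set (List ℕ × List ℕ) =>
      ∑ᶠ (p : List ℕ × List ℕ) (_ : p ∈ s),
        Dqt Sig2 Fqt PLft qv tv p.1 * Dqt Sig2 Fqt PRgt qv tv p.2) hset
    exact h1.trans ((finsum_mem_coe_finset _ _).trans (Finset.sum_image hinj))
  rw [hfin]
  by_cases hnil : γ = []
  · subst hnil
    simp [Dqt]
  have hL1 : 0 < γ.length := List.length_pos_iff.mpr hnil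
  have hn : 0 < γ.sum := sum_pos_of_comp hγ hnil
  rw [Dqt_eq Sig2 Fqt PTot qv tv γ]
  have hexp : ∀ T ∈ (setComp γ).powerset,
      coefD qv tv γ T • Mqs Sig2 Fqt PTot (compOf γ.sum T)
        = ∑ k ∈ Finset.range (T.card + 2),
            coefD qv tv γ T • (Mqs Sig2 Fqt PLft ((compOf γ.sum T).take k) *
              Mqs Sig2 Fqt PRgt ((compOf γ.sum T).drop k)) := by
    intro T hT
    rw [Mqs_split Fqt (compOf γ.sum T), length_compOf _ _ (by omega)]
    exact Finset.smul_sum (r := coefD qv tv γ T)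
      (f := fun k => Mqs Sig2 Fqt PLft ((compOf γ.sum T).take k) *
        Mqs Sig2 Fqt PRgt ((compOf γ.sum T).drop k))
      (s := Finset.range (T.card + 2))
  rw [Finset.sum_congr rfl hexp]
  have hrhs : ∀ j ∈ Finset.range (γ.length + 1),
      Dqt Sig2 Fqt PLft qv tv (γ.take j) * Dqt Sig2 Fqt PRgt qv tv (γ.drop j)
        = ∑ p ∈ (setComp (γ.take j)).powerset ×ˢ (setComp (γ.drop j)).powerset,
            (coefD qv tv (γ.take j) p.1 * coefD qv tv (γ.drop j) p.2) •
              (Mqs Sig2 Fqt PLft (compOf (γ.take j).sum p.1) *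
                Mqs Sig2 Fqt PRgt (compOf (γ.drop j).sum p.2)) := by
    intro j hj
    rw [Dqt_eq, Dqt_eq, Finset.sum_mul_sum, Finset.sum_product]
    refine Finset.sum_congr rfl (fun T1 _ => Finset.sum_congr rfl (fun T2 _ => ?_))
    rw [smul_mul_smul_comm]
  rw [Finset.sum_congr rfl hrhs]
  rw [Finset.sum_sigma' ((setComp γ).powerset) (fun T => Finset.range (T.card + 2)),
    Finset.sum_sigma' (Finset.range (γ.length + 1))
      (fun j => (setComp (γ.take j)).powerset ×ˢ (setComp (γ.drop j)).powerset)]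
  refine (Finset.sum_bij' (fun b _ => PhiFun γ b) (fun a _ => PsiFun γ a) ?_ ?_ ?_ ?_ ?_).symm
  · rintro ⟨j, T1, T2⟩ hb
    simp only [Finset.mem_sigma, Finset.mem_range, Finset.mem_product,
      Finset.mem_powerset] at hb
    exact phi_mem hγ (by omega : j ≤ γ.length) hb.2.1 hb.2.2
  · rintro ⟨T, k⟩ ha
    simp only [Finset.mem_sigma, Finset.mem_powerset, Finset.mem_range] at ha
    exact psi_mem hγ ha.1 ha.2
  · rintro ⟨j, T1, T2⟩ hb
    simp only [Finset.mem_sigma, Finset.mem_range, Finset.mem_product,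
      Finset.mem_powerset] at hb
    exact psi_phi hγ hnil (by omega : j ≤ γ.length) hb.2.1 hb.2.2
  · rintro ⟨T, k⟩ ha
    simp only [Finset.mem_sigma, Finset.mem_powerset, Finset.mem_range] at ha
    exact phi_psi hγ hnil ha.1 ha.2
  · rintro ⟨j, T1, T2⟩ hb
    simp only [Finset.mem_sigma, Finset.mem_range, Finset.mem_product,
      Finset.mem_powerset] at hb
    exact summand_eq hγ hnil (by omega : j ≤ γ.length) hb.2.1 hb.2.2

end
end QSymPaper
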